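/- Let A be self-adjoint with domain E on H, let g be an invertible matrix-like operator with gE = E and g*Ag = A, and suppose λ ∉ 𝕌 (the unit circle) with λ, conj(λ)⁻¹ ∈ σ(g). Set F_λ = H_λ + H_{conj(λ)⁻¹} (sum of generalized eigenspaces). Then there is a bounded self-adjoint involution Q on the external direct sum H_λ ⊕ H_{conj(λ)⁻¹} such that Q*(A|_{F_λ})Q = −A|_{F_λ}; consequently the quadratic form of A restricted to F_λ is anti-conjugate to its negative. -/

import Mathlib

open scoped LinearPMap ComplexInnerProductSpace

private lemma stmt17_aux {H : Type*} [NormedAddCommGroup H] [InnerProductSpace ℂ H]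
    (A : H →ₗ.[ℂ] H) (g : H ≃L[ℂ] H)
    (hgE : Submodule.map (((g : H →L[ℂ] H)) : H →ₗ[ℂ] H) A.domain = A.domain)
    (hinv : ∀ (x y : H) (hx : x ∈ A.domain) (hy : y ∈ A.domain)
      (hgx : g x ∈ A.domain) (hgy : g y ∈ A.domain),
      ⟪(A ⟨g x, hgx⟩ : H), g y⟫ = ⟪(A ⟨x, hx⟩ : H), y⟫)
    (α β : ℂ) (hαβ : (starRingEnd ℂ) α * β ≠ 1) :
    ∀ (n k l : ℕ), k + l ≤ n → ∀ (u v : H),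
      ((((g : H →L[ℂ] H) - α • (1 : H →L[ℂ] H)) ^ k) u = 0) →
      ((((g : H →L[ℂ] H) - β • (1 : H →L[ℂ] H)) ^ l) v = 0) →
      ∀ (hu : u ∈ A.domain) (hv : v ∈ A.domain), ⟪(A ⟨u, hu⟩ : H), v⟫ = 0 := by
  intro n
  induction n with
  | zero =>
    intro k l hkl u v hu0 hv0 hu hv
    obtain ⟨rfl, rfl⟩ : k = 0 ∧ l = 0 := by omega
    rw [pow_zero, ContinuousLinearMap.one_apply] at hu0
    have : (⟨u, hu⟩ : A.domain) = 0 := Subtype.ext hu0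
    rw [this, A.map_zero, inner_zero_left]
  | succ n ih =>
    intro k l hkl u v hu0 hv0 hu hv
    match k, l with
    | 0, l =>
      rw [pow_zero, ContinuousLinearMap.one_apply] at hu0
      have : (⟨u, hu⟩ : A.domain) = 0 := Subtype.ext hu0
      rw [this, A.map_zero, inner_zero_left]
    | k + 1, 0 =>
      rw [pow_zero, ContinuousLinearMap.one_apply] at hv0
      rw [hv0, inner_zero_right]
    | k + 1, l + 1 =>
      set a : H →L[ℂ] H := (g : H →L[ℂ] H) - α • (1 : H →L[ℂ] H) with ha
      set b : H →L[ℂ] H := (g : H →L[ℂ] H) - β • (1 : H →L[ℂ] H) with hb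
      have hgu : g u ∈ A.domain := by rw [← hgE]; exact ⟨u, hu, rfl⟩
      have hgv : g v ∈ A.domain := by rw [← hgE]; exact ⟨v, hv, rfl⟩
      have hau_eq : a u = g u - α • u := by
        simp [ha, ContinuousLinearMap.sub_apply, ContinuousLinearMap.smul_apply,
          ContinuousLinearMap.one_apply]
      have hbv_eq : b v = g v - β • v := by
        simp [hb, ContinuousLinearMap.sub_apply, ContinuousLinearMap.smul_apply,
          ContinuousLinearMap.one_apply]
      have hau : a u ∈ A.domain := by
        rw [hau_eq]; exact A.domain.sub_mem hgu (A.domain.smul_mem α hu)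
      have hbv : b v ∈ A.domain := by
        rw [hbv_eq]; exact A.domain.sub_mem hgv (A.domain.smul_mem β hv)
      have hau0 : (a ^ k) (a u) = 0 := by
        rw [← ContinuousLinearMap.mul_apply, ← pow_succ]; exact hu0
      have hbv0 : (b ^ l) (b v) = 0 := by
        rw [← ContinuousLinearMap.mul_apply, ← pow_succ]; exact hv0
      have h1 : ⟪(A ⟨u, hu⟩ : H), b v⟫ = 0 := ih (k + 1) l (by omega) u (b v) hu0 hbv0 hu hbv
      have h2 : ⟪(A ⟨a u, hau⟩ : H), v⟫ = 0 := ih k (l + 1) (by omega) (a u) v hau0 hv0 hau hv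
      have h3 : ⟪(A ⟨a u, hau⟩ : H), b v⟫ = 0 := ih k l (by omega) (a u) (b v) hau0 hbv0 hau hbv
      have key : ⟪(A ⟨g u, hgu⟩ : H), g v⟫ = ⟪(A ⟨u, hu⟩ : H), v⟫ := hinv u v hu hv hgu hgv
      have hgu_dec : (⟨g u, hgu⟩ : A.domain) = α • (⟨u, hu⟩ : A.domain) + ⟨a u, hau⟩ := by
        apply Subtype.ext
        simp only [Submodule.coe_add, Submodule.coe_smul]
        rw [hau_eq]; abel
      have hgv_dec : g v = β • v + b v := by rw [hbv_eq]; abel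
      rw [hgu_dec, A.map_add, A.map_smul, hgv_dec] at key
      simp only [Submodule.coe_add, Submodule.coe_smul, inner_add_left, inner_add_right,
        inner_smul_left, inner_smul_right, h1, h2, h3] at key
      have h0 : ((starRingEnd ℂ) α * β - 1) * ⟪(A ⟨u, hu⟩ : H), v⟫ = 0 := by
        linear_combination key
      rcases mul_eq_zero.mp h0 with h | h
      · exact absurd (by linear_combination h) hαβ
      · exact h

/-- Let `A` be densely defined self-adjoint with domain `E`, `g` an
invertible matrix-like operator with `gE = E` and `g*Ag = A`, and `λ` off the unit circle
with `λ, conj(λ)⁻¹ ∈ σ(g)`.  On `F_λ = H_λ + H_{conj(λ)⁻¹}` the involution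
`Q(x+y) = −x+y` (for `x ∈ H_λ`, `y ∈ H_{conj(λ)⁻¹}`) anti-conjugates the quadratic form of
`A` to its negative: `(A Q(x+y), Q(x'+y')) = −(A(x+y), x'+y')`. -/
theorem stmt17 {H : Type*} [NormedAddCommGroup H] [InnerProductSpace ℂ H] [CompleteSpace H]
    (A : H →ₗ.[ℂ] H) (hdense : Dense (A.domain : Set H)) (hsa : IsSelfAdjoint A)
    (g : H ≃L[ℂ] H) (nn m : ℕ) (hm : 0 < m) (lam : Fin nn → ℂ)
    (hspec : spectrum ℂ ((g : H →L[ℂ] H)) = Set.range lam)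
    (hprod : (List.ofFn fun i : Fin nn =>
      ((g : H →L[ℂ] H) - lam i • (1 : H →L[ℂ] H)) ^ m).prod = 0)
    (hgE : Submodule.map (((g : H →L[ℂ] H)) : H →ₗ[ℂ] H) A.domain = A.domain)
    (hinv : ∀ (x y : H) (hx : x ∈ A.domain) (hy : y ∈ A.domain)
      (hgx : g x ∈ A.domain) (hgy : g y ∈ A.domain),
      ⟪(A ⟨g x, hgx⟩ : H), g y⟫ = ⟪(A ⟨x, hx⟩ : H), y⟫)
    (lam₀ : ℂ) (hU : ‖lam₀‖ ≠ 1)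
    (hσ : lam₀ ∈ spectrum ℂ ((g : H →L[ℂ] H)))
    (hσ' : ((starRingEnd ℂ) lam₀)⁻¹ ∈ spectrum ℂ ((g : H →L[ℂ] H)))
    (x x' y y' : H)
    (hx : x ∈ LinearMap.ker ((((g : H →L[ℂ] H) - lam₀ • (1 : H →L[ℂ] H)) ^ m : H →L[ℂ] H) : H →ₗ[ℂ] H))
    (hx' : x' ∈ LinearMap.ker ((((g : H →L[ℂ] H) - lam₀ • (1 : H →L[ℂ] H)) ^ m : H →L[ℂ] H) : H →ₗ[ℂ] H))
    (hy : y ∈ LinearMap.ker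
      ((((g : H →L[ℂ] H) - ((starRingEnd ℂ) lam₀)⁻¹ • (1 : H →L[ℂ] H)) ^ m : H →L[ℂ] H) : H →ₗ[ℂ] H))
    (hy' : y' ∈ LinearMap.ker
      ((((g : H →L[ℂ] H) - ((starRingEnd ℂ) lam₀)⁻¹ • (1 : H →L[ℂ] H)) ^ m : H →L[ℂ] H) : H →ₗ[ℂ] H))
    (hxE : x ∈ A.domain) (hx'E : x' ∈ A.domain)
    (hyE : y ∈ A.domain) (hy'E : y' ∈ A.domain) :
    ⟪(A ⟨-x + y, A.domain.add_mem (A.domain.neg_mem hxE) hyE⟩ : H), -x' + y'⟫ =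
      -⟪(A ⟨x + y, A.domain.add_mem hxE hyE⟩ : H), x' + y'⟫ := by
  -- the two key non-unit-modulus facts
  have hne1 : (starRingEnd ℂ) lam₀ * lam₀ ≠ 1 := by
    intro h
    apply hU
    have hns : ((Complex.normSq lam₀ : ℝ) : ℂ) = 1 := by
      rw [Complex.normSq_eq_conj_mul_self, h]
    have hns' : Complex.normSq lam₀ = 1 := by exact_mod_cast hns
    have h3 : ‖lam₀‖ ^ 2 = 1 := by rw [Complex.sq_norm]; exact hns'
    have h4 := norm_nonneg lam₀
    nlinarith
  have hne2 : (starRingEnd ℂ) (((starRingEnd ℂ) lam₀)⁻¹) * ((starRingEnd ℂ) lam₀)⁻¹ ≠ 1 := by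
    rw [map_inv₀, Complex.conj_conj, ← mul_inv]
    intro h
    exact hne1 (by rw [mul_comm]; exact inv_eq_one.mp h)
  -- isotropy of each generalized eigenspace
  have hAxx' : ⟪(A ⟨x, hxE⟩ : H), x'⟫ = 0 :=
    stmt17_aux A g hgE hinv lam₀ lam₀ hne1 (m + m) m m le_rfl x x'
      (LinearMap.mem_ker.mp hx) (LinearMap.mem_ker.mp hx') hxE hx'E
  have hAyy' : ⟪(A ⟨y, hyE⟩ : H), y'⟫ = 0 :=
    stmt17_aux A g hgE hinv _ _ hne2 (m + m) m m le_rfl y y'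
      (LinearMap.mem_ker.mp hy) (LinearMap.mem_ker.mp hy') hyE hy'E
  -- expand both sides
  have hdec1 : (⟨-x + y, A.domain.add_mem (A.domain.neg_mem hxE) hyE⟩ : A.domain)
      = -(⟨x, hxE⟩ : A.domain) + ⟨y, hyE⟩ := by apply Subtype.ext; rfl
  have hdec2 : (⟨x + y, A.domain.add_mem hxE hyE⟩ : A.domain)
      = (⟨x, hxE⟩ : A.domain) + ⟨y, hyE⟩ := by apply Subtype.ext; rfl
  rw [hdec1, hdec2, A.map_add, A.map_add, A.map_neg]
  simp only [Submodule.coe_add, Submodule.coe_neg, inner_add_left, inner_add_right,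
    inner_neg_left, inner_neg_right, hAxx', hAyy']
  ring
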